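/- Let S = ⟨qm₁,…,qm_d, pn₁,…,pn_k⟩ be a specific gluing of S₁ and S₂. If the Hilbert function of S₁ is non-decreasing (H_{S₁}(n) ≤ H_{S₁}(n+1) for all n≥0), then the Hilbert function of S is non-decreasing. -/

import Mathlib

open scoped Pointwise

/-- `S ⊆ ℕ` is a numerical semigroup: it contains `0`, is closed under
addition, and has finite complement in `ℕ`. -/
def IsNumSgp (S : Set ℕ) : Prop :=
  (0 : ℕ) ∈ S ∧ (∀ a ∈ S, ∀ b ∈ S, a + b ∈ S) ∧ {x : ℕ | x ∉ S}.Finite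

/-- `nM S t` is the `t`-fold sumset of the maximal ideal `M = S \ {0}`,
with the convention `nM S 0 = S`. -/
def nM (S : Set ℕ) : ℕ → Set ℕ
  | 0 => S
  | t + 1 => (S \ {0}) + nM S t

/-- the order of `s` with respect to `S` : the largest `t` with `s ∈ tM`. -/
noncomputable def ordS (S : Set ℕ) (s : ℕ) : ℕ := sSup {t : ℕ | s ∈ nM S t}

/-- the multiplicity of `S` : its least nonzero element. -/
noncomputable def mult (S : Set ℕ) : ℕ := sInf {x : ℕ | x ∈ S ∧ x ≠ 0}

/-- the Apéry set of `S` with respect to `x` : elements `s ∈ S` with `s - x ∉ S`. -/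
def Ap (S : Set ℕ) (x : ℕ) : Set ℕ := {s : ℕ | s ∈ S ∧ ¬ ∃ t ∈ S, s = t + x}

/-- membership of an integer in (the image in `ℤ` of) `S`. -/
def zmem (S : Set ℕ) (z : ℤ) : Prop := ∃ t ∈ S, (t : ℤ) = z

/-- the Frobenius number of `S` : the largest integer not in `S`. -/
noncomputable def Frob (S : Set ℕ) : ℤ := sSup {z : ℤ | ¬ zmem S z}

/-- `S` is symmetric: for every integer `z`, `z ∈ S` iff `F(S) - z ∉ S`. -/
def IsSymmetric (S : Set ℕ) : Prop := ∀ z : ℤ, zmem S z ↔ ¬ zmem S (Frob S - z)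

/-- the set of maximal elements of `Ap S x` with respect to the order
`u ⪯ v` iff `v = u + z` for some `z ∈ S`. -/
def MaxAp (S : Set ℕ) (x : ℕ) : Set ℕ :=
  {w : ℕ | w ∈ Ap S x ∧ ∀ y ∈ Ap S x, (∃ z ∈ S, y = w + z) → y = w}

/-- the set of maximal elements of `Ap S x` with respect to the order
`u ⪯_M v` iff `v = u + z` for some `z ∈ S` with `ord(v) = ord(u) + ord(z)`. -/
def MaxMAp (S : Set ℕ) (x : ℕ) : Set ℕ :=
  {w : ℕ | w ∈ Ap S x ∧ ∀ y ∈ Ap S x,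
    (∃ z ∈ S, y = w + z ∧ ordS S y = ordS S w + ordS S z) → y = w}

/-- `S` is M-pure with respect to `x` : all maximal elements of `Ap S x`
under `⪯_M` have the same order. -/
def MPureWrt (S : Set ℕ) (x : ℕ) : Prop :=
  ∀ w ∈ MaxMAp S x, ∀ w' ∈ MaxMAp S x, ordS S w = ordS S w'

/-- `S` is M-pure : it is M-pure with respect to its multiplicity. -/
def MPure (S : Set ℕ) : Prop := MPureWrt S (mult S)

/-- `β_i(x)` : the number of elements of `Ap S x` of order `i`. -/
noncomputable def betaS (S : Set ℕ) (x i : ℕ) : ℕ := {w ∈ Ap S x | ordS S w = i}.ncard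

/-- `d(x)` : the maximal order of an element of `Ap S x`. -/
noncomputable def dS (S : Set ℕ) (x : ℕ) : ℕ := sSup (ordS S '' Ap S x)

/-- the reduction number of `S` : the least `r` with `(r+1)M = m(S) + rM`. -/
noncomputable def redNum (S : Set ℕ) : ℕ :=
  sInf {r : ℕ | nM S (r + 1) = (fun y => mult S + y) '' nM S r}

/-- `l_x(S) = max { ord(s+x) - ord(x) - ord(s) : s ∈ S, ord(s) ≤ r }`. -/
noncomputable def lS (S : Set ℕ) (x : ℕ) : ℕ :=
  sSup {t : ℕ | ∃ s ∈ S, ordS S s ≤ redNum S ∧ t = ordS S (s + x) - ordS S x - ordS S s}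

/-- the Hilbert function of `S`. -/
noncomputable def HilbS (S : Set ℕ) (t : ℕ) : ℕ := (nM S t \ nM S (t + 1)).ncard

/-- The data of a gluing `S = ⟨q m₁, …, q m_d, p n₁, …, p n_k⟩` of two numerical
semigroups `S₁ = ⟨m₁, …, m_d⟩` and `S₂ = ⟨n₁, …, n_k⟩`, minimally generated by
`m₁ < ⋯ < m_d` and `n₁ < ⋯ < n_k`, where `p ∈ S₁ \ {m₁, …, m_d}`,
`q ∈ S₂ \ {n₁, …, n_k}` and `gcd(p, q) = 1`. -/
structure Gluing where
  d : ℕ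
  k : ℕ
  hd : 0 < d
  hk : 0 < k
  m : Fin d → ℕ
  n : Fin k → ℕ
  p : ℕ
  q : ℕ
  hm : StrictMono m
  hn : StrictMono n
  hmin₁ : ∀ i, m i ∉ AddSubmonoid.closure (Set.range m \ {m i})
  hmin₂ : ∀ j, n j ∉ AddSubmonoid.closure (Set.range n \ {n j})
  hnum₁ : IsNumSgp (AddSubmonoid.closure (Set.range m) : Set ℕ)
  hnum₂ : IsNumSgp (AddSubmonoid.closure (Set.range n) : Set ℕ)
  hp : p ∈ AddSubmonoid.closure (Set.range m)
  hq : q ∈ AddSubmonoid.closure (Set.range n)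
  hpm : p ∉ Set.range m
  hqn : q ∉ Set.range n
  hpq : Nat.gcd p q = 1

/-- the numerical semigroup `S₁ = ⟨m₁, …, m_d⟩`. -/
def Gluing.S₁ (G : Gluing) : Set ℕ := (AddSubmonoid.closure (Set.range G.m) : Set ℕ)

/-- the numerical semigroup `S₂ = ⟨n₁, …, n_k⟩`. -/
def Gluing.S₂ (G : Gluing) : Set ℕ := (AddSubmonoid.closure (Set.range G.n) : Set ℕ)

/-- the glued numerical semigroup `S = ⟨q m₁, …, q m_d, p n₁, …, p n_k⟩`. -/
def Gluing.S (G : Gluing) : Set ℕ :=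
  (AddSubmonoid.closure
    ((fun x => G.q * x) '' Set.range G.m ∪ (fun x => G.p * x) '' Set.range G.n) : Set ℕ)

/-- the smallest generator `m₁` of `S₁`. -/
def Gluing.m₁ (G : Gluing) : ℕ := G.m ⟨0, G.hd⟩

/-- the smallest generator `n₁` of `S₂`. -/
def Gluing.n₁ (G : Gluing) : ℕ := G.n ⟨0, G.hk⟩

/-- the gluing is specific if `ord_{S₂}(q) + l_q(S₂) ≤ ord_{S₁}(p)`. -/
def Gluing.Specific (G : Gluing) : Prop := ordS G.S₂ G.q + lS G.S₂ G.q ≤ ordS G.S₁ G.p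

/-- the gluing is nice if `q = a n₁` for some `1 < a ≤ ord_{S₁}(p)`. -/
def Gluing.Nice (G : Gluing) : Prop := ∃ a : ℕ, 1 < a ∧ a ≤ ordS G.S₁ G.p ∧ G.q = a * G.n₁

set_option linter.unusedSectionVars false
section Base

variable {S : Set ℕ} (hS : IsNumSgp S)

lemma nM_zero : nM S 0 = S := rfl

lemma nM_succ (t : ℕ) : nM S (t+1) = (S \ {0}) + nM S t := rfl

lemma mem_nM_succ {x : ℕ} {t : ℕ} :
    x ∈ nM S (t+1) ↔ ∃ a ∈ S \ {0}, ∃ b ∈ nM S t, a + b = x := by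
  rw [nM_succ]; exact Set.mem_add

include hS

lemma nM_subset (t : ℕ) : nM S t ⊆ S := by
  induction t with
  | zero => exact le_refl _
  | succ t ih =>
    rintro x hx
    rw [mem_nM_succ] at hx
    obtain ⟨a, ha, b, hb, rfl⟩ := hx
    exact hS.2.1 a ha.1 b (ih hb)

lemma add_mem_nM {x y : ℕ} (hx : x ∈ S) {t : ℕ} (hy : y ∈ nM S t) : x + y ∈ nM S t := by
  induction t generalizing y with
  | zero => exact hS.2.1 x hx y hy
  | succ t ih =>
    rw [mem_nM_succ] at hy ⊢
    obtain ⟨a, ha, b, hb, rfl⟩ := hy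
    exact ⟨a, ha, x + b, ih hb, by ring⟩

lemma nM_add_mem {x y : ℕ} {a b : ℕ} (hx : x ∈ nM S a) (hy : y ∈ nM S b) :
    x + y ∈ nM S (a + b) := by
  induction a generalizing x with
  | zero => simpa [Nat.zero_add] using add_mem_nM hS (hx : x ∈ S) hy
  | succ a ih =>
    rw [mem_nM_succ] at hx
    obtain ⟨u, hu, v, hv, rfl⟩ := hx
    have h1 : v + y ∈ nM S (a + b) := ih hv
    have h2 : u + (v + y) ∈ nM S (a + b + 1) := by
      rw [mem_nM_succ]; exact ⟨u, hu, v + y, h1, rfl⟩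
    have he : a + 1 + b = a + b + 1 := by omega
    have hx2 : u + v + y = u + (v + y) := by ring
    rw [he, hx2]; exact h2

lemma nM_mem_of_le {x : ℕ} : ∀ {s t : ℕ}, s ≤ t → x ∈ nM S t → x ∈ nM S s := by
  intro s t hst hx
  induction t with
  | zero => simpa [Nat.le_zero.mp hst] using hx
  | succ t ih =>
    rcases Nat.lt_or_ge s (t+1) with h | h
    · apply ih (by omega)
      rw [mem_nM_succ] at hx
      obtain ⟨a, ha, b, hb, rfl⟩ := hx
      exact add_mem_nM hS ha.1 hb
    · have : s = t + 1 := by omega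
      exact this ▸ hx

lemma S_infinite : ∃ x ∈ S, x ≠ 0 := by
  by_contra h
  push_neg at h
  have : {x : ℕ | x ∉ S}.Infinite := by
    apply Set.Infinite.mono (s := {x : ℕ | 1 ≤ x})
    · intro x hx hxS
      have h2 := h x hxS
      simp only [Set.mem_setOf_eq] at hx
      omega
    · have : {x : ℕ | 1 ≤ x} = Set.Ici 1 := rfl
      rw [this]; exact Set.Ici_infinite 1
  exact this hS.2.2

lemma mult_mem : mult S ∈ S ∧ mult S ≠ 0 := by
  have h := S_infinite hS
  obtain ⟨x, hx, hx0⟩ := h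
  exact Nat.sInf_mem (⟨x, hx, hx0⟩ : {x : ℕ | x ∈ S ∧ x ≠ 0}.Nonempty)

lemma mult_le {x : ℕ} (hx : x ∈ S) (hx0 : x ≠ 0) : mult S ≤ x :=
  Nat.sInf_le ⟨hx, hx0⟩

lemma mult_pos : 1 ≤ mult S := Nat.one_le_iff_ne_zero.mpr (mult_mem hS).2

lemma le_of_mem_nM {x : ℕ} : ∀ {t}, x ∈ nM S t → t * mult S ≤ x
  | 0, _ => by simp
  | (t+1), hx => by
      rw [mem_nM_succ] at hx
      obtain ⟨a, ha, b, hb, rfl⟩ := hx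
      have h1 : mult S ≤ a := mult_le hS ha.1 ha.2
      have h2 : t * mult S ≤ b := le_of_mem_nM hb
      nlinarith

lemma ord_bddAbove (x : ℕ) : BddAbove {t : ℕ | x ∈ nM S t} := by
  refine ⟨x, fun t ht => ?_⟩
  have := le_of_mem_nM hS ht
  have := mult_pos hS
  nlinarith

lemma le_ordS {x t : ℕ} (hx : x ∈ nM S t) : t ≤ ordS S x :=
  le_csSup (ord_bddAbove hS x) hx

lemma mem_nM_ordS {x : ℕ} (hx : x ∈ S) : x ∈ nM S (ordS S x) := by
  have hne : {t : ℕ | x ∈ nM S t}.Nonempty := ⟨0, show x ∈ nM S 0 from hx⟩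
  exact Nat.sSup_mem hne (ord_bddAbove hS x)

lemma mem_nM_iff_le_ordS {x t : ℕ} (hx : x ∈ S) : x ∈ nM S t ↔ t ≤ ordS S x :=
  ⟨le_ordS hS, fun h => nM_mem_of_le hS h (mem_nM_ordS hS hx)⟩

lemma ordS_le_self (x : ℕ) : ordS S x ≤ x := by
  rcases Set.eq_empty_or_nonempty {t : ℕ | x ∈ nM S t} with h | h
  · simp [ordS, h]
  · have := Nat.sSup_mem h (ord_bddAbove hS x)
    have h2 := le_of_mem_nM hS this
    have h3 := mult_pos hS
    calc ordS S x = ordS S x * 1 := by ring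
    _ ≤ ordS S x * mult S := Nat.mul_le_mul_left _ h3
    _ ≤ x := h2

lemma ordS_pos {x : ℕ} (hx : x ∈ S) (hx0 : x ≠ 0) : 1 ≤ ordS S x := by
  apply le_ordS hS
  rw [mem_nM_succ]
  exact ⟨x, ⟨hx, hx0⟩, 0, hS.1, by ring⟩

lemma ordS_superadd {x y : ℕ} (hx : x ∈ S) (hy : y ∈ S) :
    ordS S x + ordS S y ≤ ordS S (x + y) :=
  le_ordS hS (nM_add_mem hS (mem_nM_ordS hS hx) (mem_nM_ordS hS hy))

lemma exists_bound : ∃ C, ∀ x, C ≤ x → x ∈ S := by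
  obtain ⟨C, hC⟩ := (hS.2.2).bddAbove
  refine ⟨C + 1, fun x hx => ?_⟩
  by_contra h
  have := hC (Set.mem_setOf.mpr h)
  omega

lemma nsmul_mem_nM {x c : ℕ} (hx : x ∈ nM S c) : ∀ t : ℕ, t * x ∈ nM S (t * c)
  | 0 => by simpa [nM_zero] using hS.1
  | (t+1) => by
      have h := nM_add_mem hS hx (nsmul_mem_nM hx t)
      have e1 : (t+1) * x = x + t * x := by ring
      have e2 : (t+1) * c = c + t * c := by ring
      rw [e1, e2]; exact h

lemma large_mem_nM {C : ℕ} (hC : ∀ x, C ≤ x → x ∈ S) {x t : ℕ}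
    (hx : t * mult S + C ≤ x) : x ∈ nM S t := by
  have hm : mult S ∈ nM S 1 := by
    rw [mem_nM_succ]; exact ⟨mult S, ⟨(mult_mem hS).1, (mult_mem hS).2⟩, 0, hS.1, by ring⟩
  have h1 : t * mult S ∈ nM S t := by simpa using nsmul_mem_nM hS hm t
  have h2 : x - t * mult S ∈ nM S 0 := hC _ (by omega)
  have := nM_add_mem hS h1 h2
  simpa [Nat.add_sub_cancel' (by omega : t * mult S ≤ x)] using this

lemma lt_of_ordS_le {C : ℕ} (hC : ∀ x, C ≤ x → x ∈ S) {x r : ℕ}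
    (hx : x ∈ S) (h : ordS S x ≤ r) : x < (r+1) * mult S + C := by
  by_contra hc
  push_neg at hc
  have := le_ordS hS (large_mem_nM hS hC (x := x) (t := r+1) hc)
  omega

end Base

section Red

variable {S : Set ℕ} (hS : IsNumSgp S)

def Good (S : Set ℕ) (r : ℕ) : Prop :=
  ∀ x ∈ nM S (r+1), ∃ y ∈ nM S r, x = mult S + y

include hS

lemma good_iff_mem (r : ℕ) :
    r ∈ {r : ℕ | nM S (r + 1) = (fun y => mult S + y) '' nM S r} ↔ Good S r := by
  constructor
  · intro h x hx
    rw [Set.mem_setOf_eq] at h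
    rw [h] at hx
    obtain ⟨y, hy, hxy⟩ := hx
    exact ⟨y, hy, hxy.symm⟩
  · intro h
    rw [Set.mem_setOf_eq]
    apply Set.Subset.antisymm
    · intro x hx
      obtain ⟨y, hy, hxy⟩ := h x hx
      exact ⟨y, hy, hxy.symm⟩
    · rintro x ⟨y, hy, rfl⟩
      have hm : mult S ∈ S \ {0} := ⟨(mult_mem hS).1, (mult_mem hS).2⟩
      rw [mem_nM_succ]
      exact ⟨mult S, hm, y, hy, rfl⟩

lemma T_mono {j : ℕ} {a b : ℕ} (hab : a ≤ b) (ha : a * mult S + j ∈ nM S a) :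
    b * mult S + j ∈ nM S b := by
  induction b with
  | zero => have : a = 0 := by omega
            exact this ▸ ha
  | succ b ih =>
    rcases Nat.lt_or_ge a (b+1) with h | h
    · have hb := ih (by omega)
      have hm : mult S ∈ nM S 1 := by
        rw [mem_nM_succ]; exact ⟨mult S, ⟨(mult_mem hS).1, (mult_mem hS).2⟩, 0, hS.1, by ring⟩
      have := nM_add_mem hS hm hb
      have he : mult S + (b * mult S + j) = (b+1) * mult S + j := by ring
      have he2 : 1 + b = b + 1 := by omega
      rw [he, he2] at this
      exact this
    · have : a = b + 1 := by omega
      exact this ▸ ha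

lemma exists_good : ∃ r, Good S r := by
  obtain ⟨C, hC⟩ := exists_bound hS
  refine ⟨Finset.sup (Finset.range C) (fun j => sInf {n : ℕ | n * mult S + j ∈ nM S n}), ?_⟩
  set r := Finset.sup (Finset.range C) (fun j => sInf {n : ℕ | n * mult S + j ∈ nM S n}) with hr
  intro x hx
  have hxge : (r+1) * mult S ≤ x := le_of_mem_nM hS hx
  have hm1 : 1 ≤ mult S := mult_pos hS
  have he : (r+1) * mult S = mult S + r * mult S := by ring
  rcases Nat.lt_or_ge x ((r+1) * mult S + C) with hlt | hge
  · -- small case: x = (r+1)*m + j with j < C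
    set j := x - (r+1) * mult S with hj
    have hjC : j < C := by omega
    have hmem : (r+1) * mult S + j ∈ nM S (r+1) := by
      have : x = (r+1) * mult S + j := by omega
      rwa [← this]
    have hne : {n : ℕ | n * mult S + j ∈ nM S n}.Nonempty := ⟨r+1, hmem⟩
    have hinf : sInf {n : ℕ | n * mult S + j ∈ nM S n} ∈ {n : ℕ | n * mult S + j ∈ nM S n} :=
      Nat.sInf_mem hne
    have hle : sInf {n : ℕ | n * mult S + j ∈ nM S n} ≤ r := by
      rw [hr]
      exact Finset.le_sup (f := fun j => sInf {n : ℕ | n * mult S + j ∈ nM S n})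
        (Finset.mem_range.mpr hjC)
    have hrj : r * mult S + j ∈ nM S r := T_mono hS hle hinf
    refine ⟨r * mult S + j, hrj, by omega⟩
  · -- large case
    have h1 : x - mult S ∈ nM S r := by
      apply large_mem_nM hS hC
      omega
    exact ⟨x - mult S, h1, by omega⟩

lemma redNum_good : Good S (redNum S) := by
  obtain ⟨r, hr⟩ := exists_good hS
  have hne : {r : ℕ | nM S (r + 1) = (fun y => mult S + y) '' nM S r}.Nonempty :=
    ⟨r, (good_iff_mem hS r).mpr hr⟩
  exact (good_iff_mem hS _).mp (Nat.sInf_mem hne)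

lemma good_succ {r : ℕ} (h : Good S r) : Good S (r+1) := by
  intro x hx
  rw [mem_nM_succ] at hx
  obtain ⟨u, hu, v, hv, rfl⟩ := hx
  obtain ⟨w, hw, rfl⟩ := h v hv
  have : u + w ∈ nM S (r+1) := by
    rw [mem_nM_succ]; exact ⟨u, hu, w, hw, rfl⟩
  exact ⟨u + w, this, by ring⟩

lemma good_of_le {n : ℕ} (h : redNum S ≤ n) : Good S n := by
  induction n with
  | zero => have : redNum S = 0 := by omega
            exact this ▸ redNum_good hS
  | succ n ih =>
    rcases Nat.lt_or_ge (redNum S) (n+1) with h2 | h2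
    · exact good_succ hS (ih (by omega))
    · have : redNum S = n + 1 := by omega
      exact this ▸ redNum_good hS

/-- exact-order decomposition: if `ord x > r` then `x = m + u` with `ord u = ord x - 1`. -/
lemma ord_decomp {x : ℕ} (hx : x ∈ S) (h : redNum S < ordS S x) :
    ∃ u ∈ S, x = mult S + u ∧ ordS S u + 1 = ordS S x := by
  set n := ordS S x with hn
  have hxn : x ∈ nM S n := mem_nM_ordS hS hx
  have hgood : Good S (n-1) := good_of_le hS (by omega)
  have hxn' : x ∈ nM S ((n-1)+1) := by
    have : (n-1)+1 = n := by omega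
    rwa [this]
  obtain ⟨u, hu, hxu⟩ := hgood x hxn'
  have huS : u ∈ S := nM_subset hS _ hu
  have h1 : n - 1 ≤ ordS S u := le_ordS hS hu
  have h2 : ordS S u + 1 ≤ n := by
    have hmo : 1 ≤ ordS S (mult S) := ordS_pos hS (mult_mem hS).1 (mult_mem hS).2
    have := ordS_superadd hS (mult_mem hS).1 huS
    rw [← hxu] at this
    omega
  exact ⟨u, huS, hxu, by omega⟩

/-- key bound lemma: `ord(s+q) ≤ ord s + ord q + l_q`. -/
lemma ordS_add_le {q : ℕ} (hq : q ∈ S) (hq0 : q ≠ 0) {s : ℕ} (hs : s ∈ S) :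
    ordS S (s + q) ≤ ordS S s + ordS S q + lS S q := by
  obtain ⟨C, hC⟩ := exists_bound hS
  -- bddAbove of the lS set
  have hbdd : BddAbove {t : ℕ | ∃ s ∈ S, ordS S s ≤ redNum S ∧
      t = ordS S (s + q) - ordS S q - ordS S s} := by
    refine ⟨(redNum S + 1) * mult S + C + q, ?_⟩
    rintro t ⟨s', hs', hord, rfl⟩
    have h1 : s' < (redNum S + 1) * mult S + C := lt_of_ordS_le hS hC hs' hord
    have h2 : ordS S (s' + q) ≤ s' + q := ordS_le_self hS _
    omega
  -- strong induction on ord s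
  have main : ∀ n, ∀ s, s ∈ S → ordS S s = n →
      ordS S (s + q) ≤ n + ordS S q + lS S q := by
    intro n
    induction n using Nat.strong_induction_on with
    | _ n ih =>
      intro s hsS hord
      rcases le_or_gt n (redNum S) with hle | hgt
      · -- base case
        have hmem : ordS S (s + q) - ordS S q - ordS S s ∈ {t : ℕ | ∃ s ∈ S,
            ordS S s ≤ redNum S ∧ t = ordS S (s + q) - ordS S q - ordS S s} :=
          ⟨s, hsS, by omega, rfl⟩
        have := le_csSup hbdd hmem
        have hsup : ordS S s + ordS S q ≤ ordS S (s + q) := ordS_superadd hS hsS hq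
        unfold lS
        omega
      · -- inductive case
        obtain ⟨u, huS, hsu, hordu⟩ := ord_decomp hS hsS (by omega)
        set N := ordS S (s + q) with hN
        have hNn : n + ordS S q ≤ N := by
          have := ordS_superadd hS hsS hq
          omega
        have hq1 : 1 ≤ ordS S q := ordS_pos hS hq hq0
        have hNr : redNum S ≤ N - 1 := by omega
        have hsq : s + q ∈ nM S ((N-1)+1) := by
          have h1 : s + q ∈ nM S N := mem_nM_ordS hS (hS.2.1 s hsS q hq)
          have : (N-1)+1 = N := by omega
          rwa [this]
        obtain ⟨w, hw, hsqw⟩ := good_of_le hS hNr (s+q) hsq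
        have hwu : w = u + q := by omega
        have hordw : N - 1 ≤ ordS S (u + q) := hwu ▸ le_ordS hS hw
        have := ih (n-1) (by omega) u huS (by omega)
        omega
  exact main (ordS S s) s hs rfl

lemma ordS_add_nsmul_le {q : ℕ} (hq : q ∈ S) (hq0 : q ≠ 0) {s : ℕ} (hs : s ∈ S) (t : ℕ) :
    ordS S (s + t * q) ≤ ordS S s + t * (ordS S q + lS S q) := by
  induction t with
  | zero => simp
  | succ t ih =>
    have hstq : s + t * q ∈ S := by
      have : t * q ∈ nM S 0 := by simpa using nsmul_mem_nM hS (show q ∈ nM S 0 from hq) t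
      exact hS.2.1 s hs _ this
    have := ordS_add_le hS hq hq0 hstq
    have he : s + (t+1) * q = (s + t * q) + q := by ring
    rw [he]
    calc ordS S ((s + t * q) + q) ≤ ordS S (s + t * q) + ordS S q + lS S q := this
    _ ≤ ordS S s + t * (ordS S q + lS S q) + ordS S q + lS S q := by omega
    _ = ordS S s + (t+1) * (ordS S q + lS S q) := by ring

end Red

section Glue

variable (G : Gluing)

lemma num₁ : IsNumSgp G.S₁ := G.hnum₁

lemma num₂ : IsNumSgp G.S₂ := G.hnum₂

lemma one_mem_of_closure {A : Set ℕ} (h : (1:ℕ) ∈ AddSubmonoid.closure A) : (1:ℕ) ∈ A := by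
  have : ∀ x ∈ AddSubmonoid.closure A, x = 1 → (1:ℕ) ∈ A := by
    intro x hx
    induction hx using AddSubmonoid.closure_induction with
    | mem y hy => intro hy1; exact hy1 ▸ hy
    | zero => intro h; omega
    | add a b ha hb iha ihb =>
      intro hab
      rcases Nat.add_eq_one_iff.mp hab with ⟨ha1, hb1⟩ | ⟨ha1, hb1⟩
      · exact ihb hb1
      · exact iha ha1
  exact this 1 h rfl

lemma q_pos : 2 ≤ G.q := by
  rcases Nat.lt_or_ge G.q 2 with h | h
  · interval_cases hq : G.q
    · -- q = 0 : gcd p 0 = p = 1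
      have hp1 : G.p = 1 := by have := G.hpq; rwa [hq, Nat.gcd_zero_right] at this
      have := one_mem_of_closure (hp1 ▸ G.hp)
      exact absurd this (hp1 ▸ G.hpm)
    · -- q = 1
      have := one_mem_of_closure (hq ▸ G.hq)
      exact absurd this (hq ▸ G.hqn)
  · exact h

lemma p_pos : 2 ≤ G.p := by
  rcases Nat.lt_or_ge G.p 2 with h | h
  · interval_cases hp : G.p
    · have hq1 : G.q = 1 := by have := G.hpq; rwa [hp, Nat.gcd_zero_left] at this
      have := one_mem_of_closure (hq1 ▸ G.hq)
      exact absurd this (hq1 ▸ G.hqn)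
    · have := one_mem_of_closure (hp ▸ G.hp)
      exact absurd this (hp ▸ G.hpm)
  · exact h

noncomputable def glMulHom (c : ℕ) : ℕ →+ ℕ where
  toFun := fun x => c * x
  map_zero' := mul_zero c
  map_add' := fun a b => mul_add c a b

lemma mem_S_iff {x : ℕ} :
    x ∈ G.S ↔ ∃ a ∈ G.S₁, ∃ b ∈ G.S₂, x = G.q * a + G.p * b := by
  have h1 : AddSubmonoid.closure ((fun x => G.q * x) '' Set.range G.m)
      = AddSubmonoid.map (glMulHom G.q) (AddSubmonoid.closure (Set.range G.m)) := by
    rw [AddMonoidHom.map_mclosure]; rfl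
  have h2 : AddSubmonoid.closure ((fun x => G.p * x) '' Set.range G.n)
      = AddSubmonoid.map (glMulHom G.p) (AddSubmonoid.closure (Set.range G.n)) := by
    rw [AddMonoidHom.map_mclosure]; rfl
  constructor
  · intro hx
    have : x ∈ AddSubmonoid.closure ((fun x => G.q * x) '' Set.range G.m) ⊔
        AddSubmonoid.closure ((fun x => G.p * x) '' Set.range G.n) := by
      rw [← AddSubmonoid.closure_union]; exact hx
    rw [AddSubmonoid.mem_sup] at this
    obtain ⟨y, hy, z, hz, hyz⟩ := this
    rw [h1] at hy; rw [h2] at hz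
    obtain ⟨a, ha, hay⟩ := hy
    obtain ⟨b, hb, hbz⟩ := hz
    exact ⟨a, ha, b, hb, by simp [glMulHom] at hay hbz; omega⟩
  · rintro ⟨a, ha, b, hb, rfl⟩
    have hy : G.q * a ∈ AddSubmonoid.closure ((fun x => G.q * x) '' Set.range G.m) := by
      rw [h1]; exact ⟨a, ha, rfl⟩
    have hz : G.p * b ∈ AddSubmonoid.closure ((fun x => G.p * x) '' Set.range G.n) := by
      rw [h2]; exact ⟨b, hb, rfl⟩
    show _ ∈ AddSubmonoid.closure _
    rw [AddSubmonoid.closure_union, AddSubmonoid.mem_sup]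
    exact ⟨G.q * a, hy, G.p * b, hz, rfl⟩

end Glue

section Glue1

variable (G : Gluing)

lemma S_num : IsNumSgp G.S := by
  refine ⟨AddSubmonoid.zero_mem _, fun a ha b hb => AddSubmonoid.add_mem _ ha hb, ?_⟩
  obtain ⟨C₁, hC₁⟩ := exists_bound (num₁ G)
  obtain ⟨C₂, hC₂⟩ := exists_bound (num₂ G)
  have hq2 : 2 ≤ G.q := q_pos G
  have hcop : Nat.Coprime G.p G.q := G.hpq
  obtain ⟨u, -, hu⟩ := Nat.exists_mul_mod_eq_one_of_coprime hcop (by omega)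
  set N := G.q * C₁ + G.p * (G.q + G.q * C₂) with hN
  apply Set.Finite.subset (Set.finite_Iio N)
  intro x hx
  simp only [Set.mem_setOf_eq] at hx
  by_contra hxN
  have hxN : N ≤ x := by simpa [Set.mem_Iio] using hxN
  apply hx
  set b := (u * x) % G.q + G.q * C₂ with hb
  have hbC : C₂ ≤ b := by
    have : C₂ ≤ G.q * C₂ := Nat.le_mul_of_pos_left _ (by omega)
    omega
  have hbS : b ∈ G.S₂ := hC₂ b hbC
  have hblt : b < G.q + G.q * C₂ := by
    have := Nat.mod_lt (u * x) (show 0 < G.q by omega)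
    omega
  have hple : G.p * b ≤ G.p * (G.q + G.q * C₂) := Nat.mul_le_mul_left _ (by omega)
  have hpbx : G.p * b ≤ x := le_trans hple (by omega)
  -- x ≡ p * b [MOD q]
  have hmod : G.p * b ≡ x [MOD G.q] := by
    calc G.p * b = G.p * ((u * x) % G.q) + (G.p * C₂) * G.q := by rw [hb]; ring
    _ ≡ G.p * ((u * x) % G.q) [MOD G.q] := by
        simpa using (Nat.ModEq.refl (G.p * ((u * x) % G.q))).add
          ((Nat.modEq_zero_iff_dvd.mpr ⟨G.p * C₂, by ring⟩))
    _ ≡ G.p * (u * x) [MOD G.q] := Nat.ModEq.mul_left _ ((Nat.mod_modEq _ _))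
    _ = (G.p * u) * x := by ring
    _ ≡ ((G.p * u) % G.q) * x [MOD G.q] := Nat.ModEq.mul_right _ ((Nat.mod_modEq _ _).symm)
    _ = 1 * x := by rw [hu]
    _ = x := by ring
  have hdvd : G.q ∣ x - G.p * b := (Nat.modEq_iff_dvd' hpbx).mp hmod
  obtain ⟨a, ha⟩ := hdvd
  have haC : C₁ ≤ a := by
    have h1 : G.q * C₁ ≤ G.q * a := by omega
    exact Nat.le_of_mul_le_mul_left h1 (by omega)
  have haS : a ∈ G.S₁ := hC₁ a haC
  rw [mem_S_iff]
  exact ⟨a, haS, b, hbS, by omega⟩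

lemma q_mul_mem_nM {a t : ℕ} (ha : a ∈ nM G.S₁ t) : G.q * a ∈ nM G.S t := by
  induction t generalizing a with
  | zero =>
    rw [nM_zero, mem_S_iff]
    exact ⟨a, ha, 0, (num₂ G).1, by ring⟩
  | succ t ih =>
    rw [mem_nM_succ] at ha
    obtain ⟨w, hw, v, hv, rfl⟩ := ha
    rw [mem_nM_succ]
    refine ⟨G.q * w, ⟨?_, ?_⟩, G.q * v, ih hv, by ring⟩
    · rw [mem_S_iff]; exact ⟨w, hw.1, 0, (num₂ G).1, by ring⟩
    · have hq2 := q_pos G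
      have : w ≠ 0 := hw.2
      simp only [Set.mem_singleton_iff]
      positivity

lemma p_mul_mem_nM {b t : ℕ} (hb : b ∈ nM G.S₂ t) : G.p * b ∈ nM G.S t := by
  induction t generalizing b with
  | zero =>
    rw [nM_zero, mem_S_iff]
    exact ⟨0, (num₁ G).1, b, hb, by ring⟩
  | succ t ih =>
    rw [mem_nM_succ] at hb
    obtain ⟨w, hw, v, hv, rfl⟩ := hb
    rw [mem_nM_succ]
    refine ⟨G.p * w, ⟨?_, ?_⟩, G.p * v, ih hv, by ring⟩
    · rw [mem_S_iff]; exact ⟨0, (num₁ G).1, w, hw.1, by ring⟩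
    · have hp2 := p_pos G
      have : w ≠ 0 := hw.2
      simp only [Set.mem_singleton_iff]
      positivity

lemma decomp {x N : ℕ} (hx : x ∈ nM G.S N) :
    ∃ A ∈ G.S₁, ∃ B ∈ G.S₂, x = G.q * A + G.p * B ∧ N ≤ ordS G.S₁ A + ordS G.S₂ B := by
  induction N generalizing x with
  | zero =>
    rw [nM_zero, mem_S_iff G] at hx
    obtain ⟨A, hA, B, hB, rfl⟩ := hx
    exact ⟨A, hA, B, hB, rfl, by omega⟩
  | succ N ih =>
    rw [mem_nM_succ] at hx
    obtain ⟨y, hy, z, hz, rfl⟩ := hx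
    obtain ⟨A, hA, B, hB, hzq, hord⟩ := ih hz
    have hyS : y ∈ G.S := hy.1
    rw [mem_S_iff G] at hyS
    obtain ⟨a', ha', b', hb', rfl⟩ := hyS
    have hne : a' ≠ 0 ∨ b' ≠ 0 := by
      by_contra hc
      push_neg at hc
      exact hy.2 (by simp [hc.1, hc.2])
    rcases hne with h | h
    · refine ⟨a' + A, (num₁ G).2.1 _ ha' _ hA, b' + B, (num₂ G).2.1 _ hb' _ hB,
        by rw [hzq]; ring, ?_⟩
      have h1 : 1 ≤ ordS G.S₁ a' := ordS_pos (num₁ G) ha' h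
      have h2 := ordS_superadd (num₁ G) ha' hA
      have h3 := ordS_superadd (num₂ G) hb' hB
      omega
    · refine ⟨a' + A, (num₁ G).2.1 _ ha' _ hA, b' + B, (num₂ G).2.1 _ hb' _ hB,
        by rw [hzq]; ring, ?_⟩
      have h1 : 1 ≤ ordS G.S₂ b' := ordS_pos (num₂ G) hb' h
      have h2 := ordS_superadd (num₁ G) ha' hA
      have h3 := ordS_superadd (num₂ G) hb' hB
      omega

end Glue1

section Glue2

variable (G : Gluing)

lemma nsmul_mem_S₂ (t : ℕ) : t * G.q ∈ G.S₂ := by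
  have hq : G.q ∈ G.S₂ := G.hq
  induction t with
  | zero => simpa using (num₂ G).1
  | succ t ih =>
    have := (num₂ G).2.1 _ ih _ hq
    have he : (t+1) * G.q = t * G.q + G.q := by ring
    rwa [he]

lemma Ap_reduce {B : ℕ} (hB : B ∈ G.S₂) : ∃ b ∈ Ap G.S₂ G.q, ∃ t, B = b + t * G.q := by
  induction B using Nat.strong_induction_on with
  | _ B ih =>
    by_cases hAp : B ∈ Ap G.S₂ G.q
    · exact ⟨B, hAp, 0, by ring⟩
    · have : ∃ t ∈ G.S₂, B = t + G.q := by
        by_contra hc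
        exact hAp ⟨hB, hc⟩
      obtain ⟨B', hB', hBB'⟩ := this
      have hq2 := q_pos G
      obtain ⟨b, hb, t, ht⟩ := ih B' (by omega) hB'
      exact ⟨b, hb, t + 1, by rw [hBB', ht]; ring⟩

lemma Ap_min {b B t : ℕ} (hb : b ∈ Ap G.S₂ G.q) (hB : B ∈ G.S₂)
    (h : b = B + (t+1) * G.q) : False := by
  apply hb.2
  refine ⟨B + t * G.q, (num₂ G).2.1 _ hB _ (nsmul_mem_S₂ G t), by rw [h]; ring⟩

lemma rep_unique {a b A B : ℕ} (hA : A ∈ G.S₁) (hb : b ∈ Ap G.S₂ G.q) (hB : B ∈ G.S₂)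
    (h : G.q * A + G.p * B = G.q * a + G.p * b) :
    ∃ t, B = b + t * G.q ∧ a = A + t * G.p := by
  have hq2 := q_pos G
  have hZ : (G.q : ℤ) * A + G.p * B = G.q * a + G.p * b := by exact_mod_cast h
  have hdvd : (G.q : ℤ) ∣ ((b : ℤ) - B) := by
    have hcop : IsCoprime (G.q : ℤ) (G.p : ℤ) := by
      rw [Int.isCoprime_iff_gcd_eq_one, Int.gcd_natCast_natCast, Nat.gcd_comm]
      exact G.hpq
    apply hcop.dvd_of_dvd_mul_left
    exact ⟨(A : ℤ) - a, by linarith⟩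
  obtain ⟨s, hs⟩ := hdvd
  rcases le_or_gt 1 s with hs1 | hs1
  · exfalso
    have hbB : b = B + ((s.toNat - 1) + 1) * G.q := by
      have h1 : (b : ℤ) = B + s * G.q := by linarith
      have h2 : ((s.toNat - 1 : ℕ) : ℤ) = s - 1 := by omega
      have : (b : ℤ) = ((B + ((s.toNat - 1) + 1) * G.q : ℕ) : ℤ) := by push_cast; rw [h2]; linarith
      exact_mod_cast this
    exact Ap_min G hb hB hbB
  · have hBb : B = b + (-s).toNat * G.q := by
      have h1 : (b : ℤ) - B = G.q * s := hs
      have h2 : (((-s).toNat : ℕ) : ℤ) = -s := by omega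
      have : (B : ℤ) = ((b + (-s).toNat * G.q : ℕ) : ℤ) := by push_cast; rw [h2]; linarith
      exact_mod_cast this
    refine ⟨(-s).toNat, hBb, ?_⟩
    have h2 : (((-s).toNat : ℕ) : ℤ) = -s := by omega
    have : (a : ℤ) = ((A + (-s).toNat * G.p : ℕ) : ℤ) := by
      push_cast
      rw [h2]
      have hq0 : (G.q : ℤ) ≠ 0 := by exact_mod_cast (by omega : G.q ≠ 0)
      have hBZ : (B : ℤ) = b - G.q * s := by linarith
      rw [hBZ] at hZ
      have : (G.q : ℤ) * a = G.q * (A + -s * G.p) := by ring_nf; ring_nf at hZ; linarith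
      have := mul_left_cancel₀ hq0 this
      linarith
    exact_mod_cast this

lemma ord_glue (hG : G.Specific) {a b : ℕ} (ha : a ∈ G.S₁) (hb : b ∈ Ap G.S₂ G.q) :
    ordS G.S (G.q * a + G.p * b) = ordS G.S₁ a + ordS G.S₂ b := by
  have hq2 := q_pos G
  have hqS : G.q ∈ G.S₂ := G.hq
  have hbS : b ∈ G.S₂ := hb.1
  apply le_antisymm
  · -- ≤ : the hard direction
    set x := G.q * a + G.p * b with hx
    have hxS : x ∈ G.S := by rw [mem_S_iff]; exact ⟨a, ha, b, hbS, rfl⟩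
    have hxN : x ∈ nM G.S (ordS G.S x) := mem_nM_ordS (S_num G) hxS
    obtain ⟨A, hA, B, hB, hxAB, hord⟩ := decomp G hxN
    obtain ⟨t, hBb, hat⟩ := rep_unique G (a := a) (b := b) hA hb hB (by omega)
    -- ord₂ B ≤ ord₂ b + t * (ord₂ q + l_q)
    have c1 : ordS G.S₂ B ≤ ordS G.S₂ b + t * (ordS G.S₂ G.q + lS G.S₂ G.q) := by
      rw [hBb]
      exact ordS_add_nsmul_le (num₂ G) hqS (by omega) hbS t
    have c2 : t * (ordS G.S₂ G.q + lS G.S₂ G.q) ≤ t * ordS G.S₁ G.p :=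
      Nat.mul_le_mul_left t hG
    have c3 : ordS G.S₁ A + t * ordS G.S₁ G.p ≤ ordS G.S₁ a := by
      rw [hat]
      have h1 : t * G.p ∈ nM G.S₁ (t * ordS G.S₁ G.p) :=
        nsmul_mem_nM (num₁ G) (mem_nM_ordS (num₁ G) G.hp) t
      exact le_ordS (num₁ G) (nM_add_mem (num₁ G) (mem_nM_ordS (num₁ G) hA) h1)
    omega
  · -- ≥
    have h1 : G.q * a ∈ nM G.S (ordS G.S₁ a) := q_mul_mem_nM G (mem_nM_ordS (num₁ G) ha)
    have h2 : G.p * b ∈ nM G.S (ordS G.S₂ b) := p_mul_mem_nM G (mem_nM_ordS (num₂ G) hbS)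
    exact le_ordS (S_num G) (nM_add_mem (S_num G) h1 h2)

lemma surj_S (hG : G.Specific) {x : ℕ} (hx : x ∈ G.S) :
    ∃ a ∈ G.S₁, ∃ b ∈ Ap G.S₂ G.q, x = G.q * a + G.p * b := by
  rw [mem_S_iff] at hx
  obtain ⟨A, hA, B, hB, rfl⟩ := hx
  obtain ⟨b, hb, t, ht⟩ := Ap_reduce G hB
  refine ⟨A + t * G.p, ?_, b, hb, by rw [ht]; ring⟩
  apply (num₁ G).2.1 _ hA
  have : t * G.p ∈ nM G.S₁ 0 := by
    simpa using nsmul_mem_nM (num₁ G) (show G.p ∈ nM G.S₁ 0 from G.hp) t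
  exact this

end Glue2

section Level

def lvl (S : Set ℕ) (n : ℕ) : Set ℕ := nM S n \ nM S (n + 1)

variable {S : Set ℕ} (hS : IsNumSgp S)

lemma HilbS_eq_lvl (n : ℕ) : HilbS S n = (lvl S n).ncard := rfl

include hS

lemma mem_lvl_iff {x n : ℕ} : x ∈ lvl S n ↔ x ∈ S ∧ ordS S x = n := by
  constructor
  · rintro ⟨h1, h2⟩
    have hxS : x ∈ S := nM_subset hS n h1
    have hord : n ≤ ordS S x := le_ordS hS h1
    refine ⟨hxS, ?_⟩
    by_contra hc
    have : n + 1 ≤ ordS S x := by omega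
    exact h2 (nM_mem_of_le hS this (mem_nM_ordS hS hxS))
  · rintro ⟨hxS, rfl⟩
    refine ⟨mem_nM_ordS hS hxS, fun hc => ?_⟩
    have := le_ordS hS hc
    omega

lemma lvl_finite (n : ℕ) : (lvl S n).Finite := by
  obtain ⟨C, hC⟩ := exists_bound hS
  apply Set.Finite.subset (Set.finite_Iio ((n+1) * mult S + C))
  intro x hx
  rw [mem_lvl_iff hS] at hx
  exact lt_of_ordS_le hS hC hx.1 (le_of_eq hx.2)

end Level

lemma exists_inj_fun {s t : Set ℕ} (hs : s.Finite) (ht : t.Finite) (h : s.ncard ≤ t.ncard) :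
    ∃ f : ℕ → ℕ, Set.MapsTo f s t ∧ Set.InjOn f s := by
  have hen : s.encard ≤ t.encard := by
    rw [hs.encard_eq_coe_toFinset_card, ht.encard_eq_coe_toFinset_card]
    rw [Set.ncard_eq_toFinset_card _ hs, Set.ncard_eq_toFinset_card _ ht] at h
    exact_mod_cast h
  obtain ⟨f, hf1, hf2⟩ := hs.exists_injOn_of_encard_le hen
  exact ⟨f, fun x hx => hf1 hx, hf2⟩



theorem stmt18 (G : Gluing) (hG : G.Specific)
    (h₁ : ∀ t : ℕ, HilbS G.S₁ t ≤ HilbS G.S₁ (t + 1)) :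
    ∀ t : ℕ, HilbS G.S t ≤ HilbS G.S (t + 1) := by
  intro n
  classical
  have hq2 := q_pos G
  -- choose level injections for S₁
  have hstep : ∀ i : ℕ, ∃ f : ℕ → ℕ,
      Set.MapsTo f (lvl G.S₁ i) (lvl G.S₁ (i+1)) ∧ Set.InjOn f (lvl G.S₁ i) := by
    intro i
    exact exists_inj_fun (lvl_finite (num₁ G) i) (lvl_finite (num₁ G) (i+1)) (h₁ i)
  choose ψ hψmap hψinj using hstep
  -- choose representations
  have hrep : ∀ x : ℕ, ∃ a b : ℕ, x ∈ G.S →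
      a ∈ G.S₁ ∧ b ∈ Ap G.S₂ G.q ∧ x = G.q * a + G.p * b := by
    intro x
    by_cases hx : x ∈ G.S
    · obtain ⟨a, ha, b, hb, hab⟩ := surj_S G hG hx
      exact ⟨a, b, fun _ => ⟨ha, hb, hab⟩⟩
    · exact ⟨0, 0, fun h => absurd h hx⟩
  choose A B hAB using hrep
  set Φ : ℕ → ℕ := fun x => G.q * ψ (ordS G.S₁ (A x)) (A x) + G.p * B x with hΦ
  -- key: for x ∈ lvl G.S n, data about Φ x
  have key : ∀ x ∈ lvl G.S n,
      A x ∈ lvl G.S₁ (ordS G.S₁ (A x)) ∧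
      ψ (ordS G.S₁ (A x)) (A x) ∈ lvl G.S₁ (ordS G.S₁ (A x) + 1) ∧
      ordS G.S₁ (A x) + ordS G.S₂ (B x) = n ∧
      x = G.q * A x + G.p * B x ∧ B x ∈ Ap G.S₂ G.q := by
    intro x hx
    rw [mem_lvl_iff (S_num G)] at hx
    obtain ⟨haS, hbAp, hxab⟩ := hAB x hx.1
    have hordx : ordS G.S₁ (A x) + ordS G.S₂ (B x) = n := by
      rw [← ord_glue G hG haS hbAp, ← hxab, hx.2]
    have hA_lvl : A x ∈ lvl G.S₁ (ordS G.S₁ (A x)) :=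
      (mem_lvl_iff (num₁ G)).mpr ⟨haS, rfl⟩
    exact ⟨hA_lvl, hψmap _ hA_lvl, hordx, hxab, hbAp⟩
  have hmaps : Set.MapsTo Φ (lvl G.S n) (lvl G.S (n+1)) := by
    intro x hx
    obtain ⟨hA_lvl, hψ_lvl, hordx, hxab, hbAp⟩ := key x hx
    have hψS : ψ (ordS G.S₁ (A x)) (A x) ∈ G.S₁ ∧
        ordS G.S₁ (ψ (ordS G.S₁ (A x)) (A x)) = ordS G.S₁ (A x) + 1 :=
      (mem_lvl_iff (num₁ G)).mp hψ_lvl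
    rw [mem_lvl_iff (S_num G)]
    constructor
    · rw [mem_S_iff]
      exact ⟨_, hψS.1, _, hbAp.1, rfl⟩
    · rw [hΦ]
      simp only
      rw [ord_glue G hG hψS.1 hbAp, hψS.2]
      omega
  have hinj : Set.InjOn Φ (lvl G.S n) := by
    intro x hx y hy hxy
    obtain ⟨hA_lvlx, hψ_lvlx, hordx, hxab, hbApx⟩ := key x hx
    obtain ⟨hA_lvly, hψ_lvly, hordy, hyab, hbApy⟩ := key y hy
    have hψSx := (mem_lvl_iff (num₁ G)).mp hψ_lvlx
    have hψSy := (mem_lvl_iff (num₁ G)).mp hψ_lvly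
    rw [hΦ] at hxy
    simp only at hxy
    -- uniqueness : B x = B y and ψ .. = ψ ..
    obtain ⟨t, hts, hta⟩ := rep_unique G (a := ψ (ordS G.S₁ (A y)) (A y)) (b := B y)
      hψSx.1 hbApy hbApx.1 hxy
    have ht0 : t = 0 := by
      by_contra hc
      refine Ap_min G (t := t - 1) hbApx hbApy.1 ?_
      have he : (t - 1 + 1) = t := by omega
      rw [he]
      exact hts
    rw [ht0] at hts hta
    simp at hts hta
    -- hts : B x = B y, hta : ψ_y (A y) = ψ_x (A x)
    have hBxy : B x = B y := hts
    have hψeq : ψ (ordS G.S₁ (A y)) (A y) = ψ (ordS G.S₁ (A x)) (A x) := hta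
    have hiord : ordS G.S₁ (A x) = ordS G.S₁ (A y) := by
      have h1 := hψSx.2
      have h2 := hψSy.2
      rw [hψeq] at h2
      omega
    have hAxy : A x = A y := by
      apply hψinj (ordS G.S₁ (A x)) hA_lvlx (hiord ▸ hA_lvly)
      rw [hψeq.symm]
      congr 1
      omega
    rw [hxab, hyab, hAxy, hBxy]
  rw [HilbS_eq_lvl, HilbS_eq_lvl]
  exact Set.ncard_le_ncard_of_injOn Φ hmaps hinj (lvl_finite (S_num G) (n+1))
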